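/- Let μ ∈ ℝ with μ + 1 ≠ 0, let A : ℝ → ℝ be smooth, and let u : ℝ × (0,∞) → ℝ be a smooth solution of x^{μ−1}u_t = (A(u)u_x)_x + x^{μ}u_x. Define T(t) = (e^{(μ+1)t} − 1)/(μ+1) and define v on {(T(t), e^t x) : t ∈ ℝ, x > 0} by v(T(t), e^t x) = u(t, x). Then v = v(s, y) is a smooth solution of y^{μ−1}v_s = (A(v)v_y)_y; i.e. the point transformation t̃ = (μ+1)^{−1}(e^{(μ+1)t} − 1), x̃ = e^t x, ũ = u maps the equation of Case 2d (B = 1, f = x^{μ−1}, h = x^{μ}) to an equation of Case 2a (B = 0). -/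

import Mathlib

open Set Real
open scoped ContDiff

theorem transformation_case2d_to_case2a
    (μ : ℝ) (hμ : μ + 1 ≠ 0)
    (A : ℝ → ℝ) (hA : ContDiff ℝ ∞ A)
    (u : ℝ → ℝ → ℝ)
    (hu : ContDiffOn ℝ ∞ (fun p : ℝ × ℝ => u p.1 p.2) (univ ×ˢ Ioi 0))
    (hpde : ∀ t : ℝ, ∀ x ∈ Ioi (0:ℝ),
      x ^ (μ - 1) * deriv (fun s => u s x) t
        = deriv (fun y => A (u t y) * deriv (fun z => u t z) y) x
          + x ^ μ * deriv (fun y => u t y) x)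
    (T : ℝ → ℝ) (hT : ∀ t : ℝ, T t = (Real.exp ((μ + 1) * t) - 1) / (μ + 1))
    (v : ℝ → ℝ → ℝ)
    (hvdef : ∀ t : ℝ, ∀ x ∈ Ioi (0:ℝ), v (T t) (Real.exp t * x) = u t x) :
    ContDiffOn ℝ ∞ (fun p : ℝ × ℝ => v p.1 p.2) (range T ×ˢ Ioi 0)
      ∧ ∀ t : ℝ, ∀ x ∈ Ioi (0:ℝ),
          (Real.exp t * x) ^ (μ - 1) * deriv (fun s => v s (Real.exp t * x)) (T t)
            = deriv (fun y => A (v (T t) y) * deriv (fun z => v (T t) z) y)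
                (Real.exp t * x) := by
  set U : ℝ × ℝ → ℝ := fun p => u p.1 p.2 with hUdef
  have hopen : IsOpen ((univ : Set ℝ) ×ˢ Ioi (0:ℝ)) := isOpen_univ.prod isOpen_Ioi
  set S : ℝ → ℝ := fun s => Real.log ((μ + 1) * s + 1) / (μ + 1) with hSdef
  -- S is a left inverse of T
  have hcT : ∀ t : ℝ, (μ + 1) * T t + 1 = Real.exp ((μ + 1) * t) := by
    intro t; rw [hT]; field_simp; ring
  have hST : ∀ t : ℝ, S (T t) = t := by
    intro t
    simp only [hSdef, hcT t, Real.log_exp]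
    field_simp
  -- range of T
  set I : Set ℝ := {s | 0 < (μ + 1) * s + 1} with hIdef
  have hIopen : IsOpen I := isOpen_lt continuous_const (by fun_prop)
  have hrange : range T = I := by
    ext s
    constructor
    · rintro ⟨t, rfl⟩
      simp only [hIdef, mem_setOf_eq, hcT t]
      exact Real.exp_pos _
    · intro hs
      refine ⟨S s, ?_⟩
      have hc : (0:ℝ) < (μ + 1) * s + 1 := hs
      rw [hT, hSdef]
      rw [mul_div_cancel₀ _ hμ, Real.exp_log hc]
      field_simp; ring
  have hTmemI : ∀ t : ℝ, T t ∈ I := by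
    intro t; rw [← hrange]; exact mem_range_self t
  -- derivative of S
  have hSderiv : ∀ s ∈ I, HasDerivAt S (((μ + 1) * s + 1)⁻¹) s := by
    intro s hs
    have hc : (0:ℝ) < (μ + 1) * s + 1 := hs
    have h1 : HasDerivAt (fun s : ℝ => (μ + 1) * s + 1) (μ + 1) s := by
      simpa using ((hasDerivAt_id s).const_mul (μ + 1)).add_const 1
    have h2 := (Real.hasDerivAt_log hc.ne').comp s h1
    have h3 := h2.div_const (μ + 1)
    rw [mul_div_cancel_right₀ _ hμ] at h3
    exact h3
  have hSsmooth : ContDiffOn ℝ ∞ S I := by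
    refine ContDiffOn.div_const ?_ (μ + 1)
    refine Real.contDiffOn_log.comp (ContDiff.contDiffOn (by fun_prop)) ?_
    intro s hs
    exact (ne_of_gt (show (0:ℝ) < (μ+1)*s+1 from hs))
  -- v equals u ∘ Φ on I ×ˢ Ioi 0
  have hveq : ∀ s ∈ I, ∀ y ∈ Ioi (0:ℝ),
      v s y = U (S s, Real.exp (-(S s)) * y) := by
    intro s hs y hy
    obtain ⟨t, rfl⟩ : s ∈ range T := by rw [hrange]; exact hs
    have hx : Real.exp (-t) * y ∈ Ioi (0:ℝ) :=
      mul_pos (Real.exp_pos _) hy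
    have := hvdef t _ hx
    rw [show Real.exp t * (Real.exp (-t) * y) = y by
      rw [← mul_assoc, ← Real.exp_add]; simp] at this
    rw [hST t, this]
  -- Smoothness of v on range T ×ˢ Ioi 0
  have hsmooth : ContDiffOn ℝ ∞ (fun p : ℝ × ℝ => v p.1 p.2) (range T ×ˢ Ioi 0) := by
    rw [hrange]
    have hΦ : ContDiffOn ℝ ∞ (fun p : ℝ × ℝ => (S p.1, Real.exp (-(S p.1)) * p.2))
        (I ×ˢ Ioi 0) := by
      have hS1 : ContDiffOn ℝ ∞ (fun p : ℝ × ℝ => S p.1) (I ×ˢ Ioi 0) := by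
        refine hSsmooth.comp (contDiff_fst.contDiffOn) ?_
        intro p hp; exact hp.1
      exact hS1.prodMk (((Real.contDiff_exp.comp_contDiffOn hS1.neg)).mul
        contDiff_snd.contDiffOn)
    have hcomp : ContDiffOn ℝ ∞
        ((fun p : ℝ × ℝ => U p) ∘ (fun p : ℝ × ℝ => (S p.1, Real.exp (-(S p.1)) * p.2)))
        (I ×ˢ Ioi 0) := by
      refine hu.comp hΦ ?_
      rintro ⟨s, y⟩ ⟨hs, hy⟩
      exact ⟨mem_univ _, mul_pos (Real.exp_pos _) hy⟩
    refine hcomp.congr ?_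
    rintro ⟨s, y⟩ ⟨hs, hy⟩
    exact hveq s hs y hy
  refine ⟨hsmooth, ?_⟩
  -- partial derivatives of u
  have hUdiff : ∀ t : ℝ, ∀ x ∈ Ioi (0:ℝ), HasFDerivAt U (fderiv ℝ U (t, x)) (t, x) := by
    intro t x hx
    have : ContDiffAt ℝ ∞ U (t, x) :=
      hu.contDiffAt (hopen.mem_nhds ⟨mem_univ _, hx⟩)
    exact (this.differentiableAt (by simp)).hasFDerivAt
  have hP1 : ∀ t : ℝ, ∀ x ∈ Ioi (0:ℝ),
      HasDerivAt (fun s => u s x) (fderiv ℝ U (t, x) (1, 0)) t := by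
    intro t x hx
    have hline : HasDerivAt (fun s : ℝ => ((s, x) : ℝ × ℝ)) ((1:ℝ), (0:ℝ)) t :=
      (hasDerivAt_id t).prodMk (hasDerivAt_const t x)
    exact (hUdiff t x hx).comp_hasDerivAt t hline
  have hP2 : ∀ t : ℝ, ∀ x ∈ Ioi (0:ℝ),
      HasDerivAt (fun z => u t z) (fderiv ℝ U (t, x) (0, 1)) x := by
    intro t x hx
    have hline : HasDerivAt (fun z : ℝ => ((t, z) : ℝ × ℝ)) ((0:ℝ), (1:ℝ)) x :=
      (hasDerivAt_const x t).prodMk (hasDerivAt_id x)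
    exact (hUdiff t x hx).comp_hasDerivAt x hline
  -- second x-derivative data
  set Ux : ℝ × ℝ → ℝ := fun p => fderiv ℝ U p ((0:ℝ), (1:ℝ)) with hUxdef
  have hUxsmooth : ContDiffOn ℝ ∞ Ux (univ ×ˢ Ioi 0) := by
    have h1 : ContDiffOn ℝ ∞ (fderiv ℝ U) (univ ×ˢ Ioi 0) :=
      hu.fderiv_of_isOpen hopen (by exact_mod_cast le_top)
    exact h1.clm_apply contDiffOn_const
  intro t x hx
  have hxpos : (0:ℝ) < x := hx
  set e : ℝ := Real.exp (-((μ + 1) * t)) with hedef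
  set y₀ : ℝ := Real.exp t * x with hy₀def
  have hy₀pos : (0:ℝ) < y₀ := mul_pos (Real.exp_pos _) hxpos
  have hxy : Real.exp (-t) * y₀ = x := by
    rw [hy₀def, ← mul_assoc, ← Real.exp_add]; simp
  -- LHS: time derivative of v
  have hL : deriv (fun s => v s y₀) (T t)
      = e * fderiv ℝ U (t, x) (1, 0) - e * x * fderiv ℝ U (t, x) (0, 1) := by
    have heq : (fun s => v s y₀) =ᶠ[nhds (T t)]
        (fun s => U (S s, Real.exp (-(S s)) * y₀)) := by
      filter_upwards [hIopen.mem_nhds (hTmemI t)] with s hs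
      exact hveq s hs y₀ hy₀pos
    rw [heq.deriv_eq]
    have hSd : HasDerivAt S e (T t) := by
      have := hSderiv (T t) (hTmemI t)
      rwa [hcT t, ← Real.exp_neg] at this
    have hexpd : HasDerivAt (fun s => Real.exp (-(S s)) * y₀)
        (-(Real.exp (-t)) * e * y₀) (T t) := by
      have h1 : HasDerivAt (fun s => -(S s)) (-e) (T t) := hSd.neg
      have h2 : HasDerivAt (fun s => Real.exp (-(S s)))
          (Real.exp (-(S (T t))) * (-e)) (T t) := h1.exp
      have h3 := h2.mul_const y₀
      have h4 : -(Real.exp (-t)) * e * y₀ = Real.exp (-(S (T t))) * (-e) * y₀ := by rw [hST t]; ring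
      rw [h4]; exact h3
    have hgd : HasDerivAt (fun s => ((S s, Real.exp (-(S s)) * y₀) : ℝ × ℝ))
        ((e, -(Real.exp (-t)) * e * y₀)) (T t) := hSd.prodMk hexpd
    have hgval : ((S (T t), Real.exp (-(S (T t))) * y₀) : ℝ × ℝ) = (t, x) := by
      rw [hST t, hxy]
    have hF : HasFDerivAt U (fderiv ℝ U (t, x)) ((S (T t), Real.exp (-(S (T t))) * y₀)) := by
      rw [hgval]; exact hUdiff t x hx
    have hcomp := hF.comp_hasDerivAt (T t) hgd
    simp only [Function.comp_def] at hcomp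
    rw [hcomp.deriv]
    have hvec : ((e, -(Real.exp (-t)) * e * y₀) : ℝ × ℝ)
        = e • ((1:ℝ), (0:ℝ)) + (-(e * x)) • ((0:ℝ), (1:ℝ)) := by
      have : -(Real.exp (-t)) * e * y₀ = -(e * x) := by
        rw [hy₀def, show -(Real.exp (-t)) * e * (Real.exp t * x) = -(e * x * (Real.exp (-t) * Real.exp t)) by ring, ← Real.exp_add, neg_add_cancel, Real.exp_zero, mul_one]
      rw [this]; simp [Prod.ext_iff]
    rw [hvec]
    simp only [map_add, map_smul]
    ring_nf
  -- spatial derivative of v (T t)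
  have hvder : ∀ z ∈ Ioi (0:ℝ), deriv (fun w => v (T t) w) z
      = Real.exp (-t) * Ux (t, Real.exp (-t) * z) := by
    intro z hz
    have hz' : Real.exp (-t) * z ∈ Ioi (0:ℝ) := mul_pos (Real.exp_pos _) hz
    have heq : (fun w => v (T t) w) =ᶠ[nhds z] (fun w => u t (Real.exp (-t) * w)) := by
      filter_upwards [isOpen_Ioi.mem_nhds hz] with w hw
      have := hvdef t _ (mul_pos (Real.exp_pos (-t)) hw)
      rw [show Real.exp t * (Real.exp (-t) * w) = w by
        rw [← mul_assoc, ← Real.exp_add]; simp] at this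
      exact this
    rw [heq.deriv_eq]
    have hin : HasDerivAt (fun w : ℝ => Real.exp (-t) * w) (Real.exp (-t)) z := by
      simpa using (hasDerivAt_id z).const_mul (Real.exp (-t))
    have hout := hP2 t _ hz'
    have hcmp := hout.comp z hin
    simp only [Function.comp_def] at hcmp
    rw [hcmp.deriv]
    rw [hUxdef]; ring
  -- RHS computation
  have hWdiff : DifferentiableAt ℝ (fun z => A (u t z) * Ux (t, z)) x := by
    have hl : ContDiffAt ℝ ∞ (fun p : ℝ × ℝ => A (U p) * Ux p) (t, x) := by
      have h1 : ContDiffOn ℝ ∞ (fun p : ℝ × ℝ => A (U p) * Ux p) (univ ×ˢ Ioi 0) :=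
        (hA.comp_contDiffOn hu).mul hUxsmooth
      exact h1.contDiffAt (hopen.mem_nhds ⟨mem_univ _, hx⟩)
    have hline : ContDiffAt ℝ ∞ (fun z : ℝ => ((t, z) : ℝ × ℝ)) x := by fun_prop
    exact ((hl.comp x hline).differentiableAt (by simp))
  set W : ℝ → ℝ := fun z => A (u t z) * Ux (t, z) with hWdef
  have hR : deriv (fun y => A (v (T t) y) * deriv (fun z => v (T t) z) y) y₀
      = Real.exp (-t) * Real.exp (-t) * deriv W x := by
    have heq : (fun y => A (v (T t) y) * deriv (fun z => v (T t) z) y) =ᶠ[nhds y₀]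
        (fun y => Real.exp (-t) * W (Real.exp (-t) * y)) := by
      filter_upwards [isOpen_Ioi.mem_nhds hy₀pos] with y hy
      have h1 := hvder y hy
      have h2 : v (T t) y = u t (Real.exp (-t) * y) := by
        have := hvdef t _ (mul_pos (Real.exp_pos (-t)) hy)
        rw [show Real.exp t * (Real.exp (-t) * y) = y by
          rw [← mul_assoc, ← Real.exp_add]; simp] at this
        exact this
      rw [h1, h2, hWdef]; ring
    rw [heq.deriv_eq]
    have hWd : HasDerivAt W (deriv W x) x := hWdiff.hasDerivAt
    have hin : HasDerivAt (fun y : ℝ => Real.exp (-t) * y) (Real.exp (-t)) y₀ := by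
      simpa using (hasDerivAt_id y₀).const_mul (Real.exp (-t))
    have hWcomp : HasDerivAt (fun y => W (Real.exp (-t) * y))
        (deriv W x * Real.exp (-t)) y₀ := by
      have h5 : HasDerivAt W (deriv W x) (Real.exp (-t) * y₀) := by rw [hxy]; exact hWd
      have h6 := h5.comp y₀ hin
      simpa [Function.comp_def] using h6
    have := hWcomp.const_mul (Real.exp (-t))
    rw [this.deriv]; ring
  -- translate pde
  have hut : deriv (fun s => u s x) t = fderiv ℝ U (t, x) (1, 0) := (hP1 t x hx).deriv
  have hux : deriv (fun z => u t z) x = fderiv ℝ U (t, x) (0, 1) := (hP2 t x hx).deriv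
  have hGW : deriv (fun y => A (u t y) * deriv (fun z => u t z) y) x = deriv W x := by
    have heq : (fun y => A (u t y) * deriv (fun z => u t z) y) =ᶠ[nhds x] W := by
      filter_upwards [isOpen_Ioi.mem_nhds hx] with z hz
      rw [hWdef, (hP2 t z hz).deriv, hUxdef]
    exact heq.deriv_eq
  have hpde' := hpde t x hx
  rw [hut, hux, hGW] at hpde'
  -- final algebra
  rw [hL, hR]
  have hexp1 : (Real.exp t * x) ^ (μ - 1) = Real.exp ((μ - 1) * t) * x ^ (μ - 1) := by
    rw [Real.mul_rpow (Real.exp_pos t).le hxpos.le,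
      Real.rpow_def_of_pos (Real.exp_pos t), Real.log_exp, mul_comm t (μ - 1)]
  have hxpow : x ^ (μ - 1) * x = x ^ μ := by
    rw [← Real.rpow_add_one hxpos.ne' (μ - 1)]; ring_nf
  have hee : Real.exp ((μ - 1) * t) * e = Real.exp (-t) * Real.exp (-t) := by
    rw [hedef, ← Real.exp_add, ← Real.exp_add]; ring_nf
  calc (Real.exp t * x) ^ (μ - 1) *
        (e * fderiv ℝ U (t, x) (1, 0) - e * x * fderiv ℝ U (t, x) (0, 1))
      = (Real.exp ((μ - 1) * t) * e) *
        (x ^ (μ - 1) * fderiv ℝ U (t, x) (1, 0) - x ^ (μ - 1) * x * fderiv ℝ U (t, x) (0, 1)) := by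
        rw [hexp1]; ring
    _ = Real.exp (-t) * Real.exp (-t) * deriv W x := by
        rw [hee, hxpow, hpde']; ring
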